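/- Let G be an invertible symmetric real n×n matrix, N a real n×q matrix, n⁺ ∈ ℝⁿ, and N₊ = [N n⁺], with both NᵀG⁻¹N and N₊ᵀG⁻¹N₊ invertible. Let H = G⁻¹(I − N N*), H₊ = G⁻¹(I − N₊ N₊*) with P* = (PᵀG⁻¹P)⁻¹PᵀG⁻¹, let c ∈ ℝⁿ, g(w) = Gw + c, and fix z ∈ ℝⁿ with H₊ g(z) = 0. For any t ∈ ℝ set d = H n⁺ and z̄ = z + t d. Then: (a) H₊ g(z̄) = 0; (b) Nᵀ z̄ = Nᵀ z (every active linear functional n_iᵀz with n_i a column of N is unchanged); (c) n⁺ᵀ z̄ = n⁺ᵀ z + t · n⁺ᵀ H n⁺. -/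

import Mathlib

open Matrix

/-- Moving along `d = H n⁺` from a point `z` with `H₊ g(z) = 0` preserves the
stationarity condition and the active linear functionals, while the new constraint
value changes at rate `n⁺ᵀ H n⁺`. -/
theorem stmt_3 {n q : ℕ} (G : Matrix (Fin n) (Fin n) ℝ)
    (hGsym : G.IsSymm) (hG : IsUnit G.det)
    (N : Matrix (Fin n) (Fin q) ℝ) (nplus : Fin n → ℝ)
    (Nplus : Matrix (Fin n) (Fin q ⊕ Unit) ℝ)
    (hNplus : Nplus = Matrix.fromCols N (Matrix.replicateCol Unit nplus))
    (hN : IsUnit (Nᵀ * G⁻¹ * N).det)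
    (hNp : IsUnit (Nplusᵀ * G⁻¹ * Nplus).det)
    (H Hplus : Matrix (Fin n) (Fin n) ℝ)
    (hH : H = G⁻¹ * (1 - N * ((Nᵀ * G⁻¹ * N)⁻¹ * Nᵀ * G⁻¹)))
    (hHplus : Hplus = G⁻¹ * (1 - Nplus * ((Nplusᵀ * G⁻¹ * Nplus)⁻¹ * Nplusᵀ * G⁻¹)))
    (c : Fin n → ℝ) (g : (Fin n → ℝ) → Fin n → ℝ) (hg : ∀ w, g w = G *ᵥ w + c)
    (z : Fin n → ℝ) (hz : Hplus *ᵥ g z = 0)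
    (t : ℝ) (d : Fin n → ℝ) (hd : d = H *ᵥ nplus)
    (zbar : Fin n → ℝ) (hzbar : zbar = z + t • d) :
    Hplus *ᵥ g zbar = 0 ∧
    Nᵀ *ᵥ zbar = Nᵀ *ᵥ z ∧
    nplus ⬝ᵥ zbar = nplus ⬝ᵥ z + t * (nplus ⬝ᵥ H *ᵥ nplus) := by
  -- Hplus kills Nplus
  have hHpNp : Hplus * Nplus = 0 := by
    have key : Nplus * ((Nplusᵀ * G⁻¹ * Nplus)⁻¹ * Nplusᵀ * G⁻¹) * Nplus = Nplus := by
      calc Nplus * ((Nplusᵀ * G⁻¹ * Nplus)⁻¹ * Nplusᵀ * G⁻¹) * Nplus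
          = Nplus * ((Nplusᵀ * G⁻¹ * Nplus)⁻¹ * (Nplusᵀ * G⁻¹ * Nplus)) := by
            simp only [Matrix.mul_assoc]
        _ = Nplus := by rw [Matrix.nonsing_inv_mul _ hNp, Matrix.mul_one]
    rw [hHplus, Matrix.mul_assoc, Matrix.sub_mul, Matrix.one_mul, key, sub_self,
      Matrix.mul_zero]
  have hHpN : Hplus * N = 0 ∧ Hplus * Matrix.replicateCol Unit nplus = 0 := by
    rw [hNplus, Matrix.mul_fromCols] at hHpNp
    have h0 : Matrix.fromCols (Hplus * N) (Hplus * Matrix.replicateCol Unit nplus)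
        = Matrix.fromCols (0 : Matrix (Fin n) (Fin q) ℝ)
          (0 : Matrix (Fin n) Unit ℝ) := by
      rw [Matrix.fromCols_zero]; exact hHpNp
    exact Matrix.fromCols_inj h0
  have hHpnplus : Hplus *ᵥ nplus = 0 := by
    funext i
    have := congrFun (congrFun hHpN.2 i) ()
    simpa [Matrix.mul_apply, Matrix.mulVec, dotProduct] using this
  -- G * H
  have hGH : G * H = 1 - N * ((Nᵀ * G⁻¹ * N)⁻¹ * Nᵀ * G⁻¹) := by
    rw [hH, Matrix.mul_nonsing_inv_cancel_left _ _ hG]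
  -- Hplus *ᵥ (G *ᵥ d) = 0
  have hkey : Hplus *ᵥ (G *ᵥ d) = 0 := by
    rw [hd, Matrix.mulVec_mulVec, Matrix.mulVec_mulVec, Matrix.mul_assoc Hplus G H, hGH,
      Matrix.mul_sub, Matrix.mul_one, ← Matrix.mul_assoc, hHpN.1, Matrix.zero_mul,
      sub_zero, hHpnplus]

  -- Nᵀ * H = 0
  have hNtH : Nᵀ * H = 0 := by
    have key : Nᵀ * G⁻¹ * (N * ((Nᵀ * G⁻¹ * N)⁻¹ * Nᵀ * G⁻¹)) = Nᵀ * G⁻¹ := by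
      calc Nᵀ * G⁻¹ * (N * ((Nᵀ * G⁻¹ * N)⁻¹ * Nᵀ * G⁻¹))
          = (Nᵀ * G⁻¹ * N) * ((Nᵀ * G⁻¹ * N)⁻¹ * (Nᵀ * G⁻¹)) := by
            simp only [Matrix.mul_assoc]
        _ = Nᵀ * G⁻¹ := Matrix.mul_nonsing_inv_cancel_left _ _ hN
    rw [hH, ← Matrix.mul_assoc, Matrix.mul_sub, Matrix.mul_one, key, sub_self]
  refine ⟨?_, ?_, ?_⟩
  · have hgz : g zbar = g z + t • (G *ᵥ d) := by
      rw [hg, hg, hzbar, Matrix.mulVec_add, Matrix.mulVec_smul]; abel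
    rw [hgz, Matrix.mulVec_add, hz, zero_add, Matrix.mulVec_smul, hkey, smul_zero]
  · rw [hzbar, Matrix.mulVec_add, Matrix.mulVec_smul, hd, Matrix.mulVec_mulVec, hNtH,
      Matrix.zero_mulVec, smul_zero, add_zero]
  · rw [hzbar, dotProduct_add, dotProduct_smul, hd, smul_eq_mul]
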